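/- If A is a maximal subring of a ring B, then M_n(A) is a maximal subring of M_n(B) for every n ≥ 1. -/

import Mathlib

open Matrix

lemma sandwich {B : Type*} [Ring B] {n : ℕ} (k i j l : Fin n) (X : Matrix (Fin n) (Fin n) B) :
    Matrix.single k i 1 * X * Matrix.single j l 1 = Matrix.single k l (X i j) := by
  ext a b
  simp [mul_apply, Matrix.single, ite_and, Finset.sum_ite_eq, Finset.sum_ite_eq']
  split_ifs <;> simp

lemma stdBasisMatrix_neg' {B : Type*} [Ring B] {n : ℕ} (i j : Fin n) (b : B) :
    Matrix.single i j (-b) = -Matrix.single i j b := by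
  ext a c
  simp [Matrix.single]
  split_ifs <;> simp

/-- The subring of `Mₙ(B)` of matrices with entries in a subring `A`. -/
def matrixSubring {B : Type*} [Ring B] (A : Subring B) (n : ℕ) :
    Subring (Matrix (Fin n) (Fin n) B) where
  carrier := {X | ∀ i j, X i j ∈ A}
  zero_mem' := fun i j => by simpa using A.zero_mem
  one_mem' := fun i j => by
    by_cases h : i = j <;> simp [Matrix.one_apply, h, A.one_mem, A.zero_mem]
  add_mem' := fun hX hY i j => A.add_mem (hX i j) (hY i j)
  neg_mem' := fun hX i j => A.neg_mem (hX i j)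
  mul_mem' := fun {X Y} hX hY i j => by
    rw [Matrix.mul_apply]
    exact Subring.sum_mem A fun l _ => A.mul_mem (hX i l) (hY l j)

lemma stdBasisMatrix_mem_matrixSubring {B : Type*} [Ring B] {A : Subring B} {n : ℕ}
    (i j : Fin n) {a : B} (ha : a ∈ A) : Matrix.single i j a ∈ matrixSubring A n := by
  intro k l
  simp only [Matrix.single, of_apply]
  split_ifs <;> simp [ha, A.zero_mem]

/-- If `A` is a maximal subring of `B`, then `Mₙ(A)` is a maximal subring of `Mₙ(B)`. -/
theorem stmt6 {B : Type*} [Ring B] (A : Subring B) (hA : IsCoatom A) (n : ℕ) (hn : 1 ≤ n) :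
    IsCoatom (matrixSubring A n) := by
  have i0 : Fin n := ⟨0, hn⟩
  constructor
  · intro h
    apply hA.1
    rw [eq_top_iff]
    intro b _
    have : Matrix.single i0 i0 b ∈ matrixSubring A n := h ▸ trivial
    simpa using this i0 i0
  · intro S hS
    -- the subring C of entries b whose std basis matrices all lie in S
    have hle : matrixSubring A n ≤ S := hS.le
    have hone : ∀ i j : Fin n, Matrix.single i j (1 : B) ∈ S :=
      fun i j => hle (stdBasisMatrix_mem_matrixSubring i j A.one_mem)
    let C : Subring B :=
      { carrier := {b | ∀ i j : Fin n, Matrix.single i j b ∈ S}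
        zero_mem' := fun i j => by simpa [Matrix.single_zero] using S.zero_mem
        one_mem' := hone
        add_mem' := fun {b c} hb hc i j => by
          rw [Matrix.single_add]; exact S.add_mem (hb i j) (hc i j)
        neg_mem' := fun {b} hb i j => by
          rw [stdBasisMatrix_neg']; exact S.neg_mem (hb i j)
        mul_mem' := fun {b c} hb hc i j => by
          have := S.mul_mem (hb i i0) (hc i0 j)
          rwa [Matrix.single_mul_single_same] at this }
    have hAC : A ≤ C := fun a ha i j => hle (stdBasisMatrix_mem_matrixSubring i j ha)
    -- C is strictly bigger than A
    obtain ⟨X, hXS, hXA⟩ := SetLike.exists_of_lt hS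
    have : ∃ i j, X i j ∉ A := by
      by_contra h
      push_neg at h
      exact hXA h
    obtain ⟨i, j, hij⟩ := this
    have hXC : X i j ∈ C := by
      intro k l
      have := S.mul_mem (S.mul_mem (hone k i) hXS) (hone j l)
      rwa [sandwich] at this
    have hCtop : C = ⊤ := hA.2 C (lt_of_le_of_ne hAC (fun h => hij (h ▸ hXC)))
    -- conclude S = ⊤
    rw [eq_top_iff]
    intro Y _
    rw [matrix_eq_sum_single Y]
    refine S.sum_mem fun i _ => S.sum_mem fun j _ => ?_
    have : Y i j ∈ C := hCtop ▸ trivial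
    exact this i j
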